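/- arXiv:2511.15554 — 7 statements merged into one kernel-verified Lean document; each statement's English description precedes it below -/
import Mathlib

section
/- (Chemicality for quadratic parts, Lemma 3.7) Let q_i(x) = β_{i,i} x_i² + ∑_{j∈J_i} β_{i,j} x_j² + ∑_{j∈J_i} γ_{i,j} x_i x_j + ∑_{(k,l)∈π(J_i), k≠l} δ_{i,k,l} x_k x_l, where β_{i,i} ≥ 0, and for all j,k,l ∈ J_i (indices ≠ i): β_{i,j} ≥ 0, δ_{i,k,l} ≥ 0, γ_{i,j} ≤ 0. Suppose a ∈ ℝ^N with positive entries satisfies β_{i,i} a_i ≥ ∑_{j∈J_i} (−γ_{i,j}) a_j and, for every j ∈ J_i, (−γ_{i,j}) a_i ≥ 2β_{i,j} a_j + ∑_{l∈J_i, l≠j} δ_{i,j,l} a_l. Then there exists μ₀ > 0 such that for every μ ∈ (0, μ₀), the function x̄ ↦ q_i(x̄ − a/μ) is chemical with respect to coordinate i. -/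
def IsChemical {N : ℕ} (i : Fin N) (f : (Fin N → ℝ) → ℝ) : Prop :=
  ∀ x : Fin N → ℝ, x i = 0 → (∀ j, j ≠ i → 0 ≤ x j) → 0 ≤ f x

/-- Chemicality for quadratic parts (Lemma 3.7): under the sign conditions and
the linear inequalities on `a`, the translated quadratic form
`x̄ ↦ q_i(x̄ - a/μ)` is chemical with respect to coordinate `i` for every
sufficiently small `μ > 0`. -/
theorem stmt8 {N : ℕ} (i : Fin N) (J : Finset (Fin N)) (hiJ : i ∉ J)
    (βii : ℝ) (hβii : 0 ≤ βii)
    (β γ : Fin N → ℝ) (δ : Fin N → Fin N → ℝ)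
    (hβ : ∀ j ∈ J, 0 ≤ β j) (hγ : ∀ j ∈ J, γ j ≤ 0)
    (hδ : ∀ k ∈ J, ∀ l ∈ J, k ≠ l → 0 ≤ δ k l)
    (hδsymm : ∀ k l, δ k l = δ l k)
    (a : Fin N → ℝ) (ha : ∀ j, 0 < a j)
    (h1 : ∑ j ∈ J, (-γ j) * a j ≤ βii * a i)
    (h2 : ∀ j ∈ J, 2 * β j * a j + ∑ l ∈ J.erase j, δ j l * a l ≤ (-γ j) * a i) :
    ∃ μ0 > 0, ∀ μ ∈ Set.Ioo (0:ℝ) μ0,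
      IsChemical i (fun x =>
        (fun y : Fin N → ℝ =>
          βii * (y i)^2 + (∑ j ∈ J, β j * (y j)^2) + (∑ j ∈ J, γ j * y i * y j)
          + ∑ k ∈ J, ∑ l ∈ J.filter (fun l => k < l), δ k l * y k * y l)
        (fun k => x k - a k / μ)) := by
  classical
  -- splitting a pair sum into a sum over off-diagonal entries
  have pair_split : ∀ f : Fin N → Fin N → ℝ,
      (∑ k ∈ J, ∑ l ∈ J.filter (fun l => k < l), (f k l + f l k))
        = ∑ j ∈ J, ∑ l ∈ J.erase j, f j l := by
    intro f
    have hsplit : ∀ (j : Fin N) (h : Fin N → ℝ),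
        ∑ l ∈ J.erase j, h l
          = (∑ l ∈ J.filter (fun l => j < l), h l)
            + ∑ l ∈ J.filter (fun l => l < j), h l := by
      intro j h
      rw [← Finset.sum_filter_add_sum_filter_not (J.erase j) (fun l => j < l)]
      congr 1
      · apply Finset.sum_congr _ (fun _ _ => rfl)
        ext l
        simp only [Finset.mem_filter, Finset.mem_erase]
        constructor
        · rintro ⟨⟨_, hl⟩, hlt⟩; exact ⟨hl, hlt⟩
        · rintro ⟨hl, hlt⟩; exact ⟨⟨ne_of_gt hlt, hl⟩, hlt⟩
      · apply Finset.sum_congr _ (fun _ _ => rfl)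
        ext l
        simp only [Finset.mem_filter, Finset.mem_erase]
        constructor
        · rintro ⟨⟨hne, hl⟩, hnot⟩; exact ⟨hl, lt_of_le_of_ne (le_of_not_gt hnot) hne⟩
        · rintro ⟨hl, hlt⟩; exact ⟨⟨ne_of_lt hlt, hl⟩, lt_asymm hlt⟩
    simp only [Finset.sum_add_distrib]
    have hswap : (∑ k ∈ J, ∑ l ∈ J.filter (fun l => k < l), f l k)
        = ∑ j ∈ J, ∑ l ∈ J.filter (fun l => l < j), f j l :=
      Finset.sum_comm' (fun k l => by simp only [Finset.mem_filter]; tauto)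
    rw [hswap, ← Finset.sum_add_distrib]
    exact Finset.sum_congr rfl fun j _ => (hsplit j _).symm
  -- the key inequality, independent of μ
  have key : ∀ u : Fin N → ℝ, (∀ j ∈ J, 0 ≤ u j) →
      0 ≤ βii * (a i)^2 + (∑ j ∈ J, β j * (u j - a j)^2)
        + (∑ j ∈ J, γ j * ((0 - a i) : ℝ) * (u j - a j))
        + ∑ k ∈ J, ∑ l ∈ J.filter (fun l => k < l),
            δ k l * (u k - a k) * (u l - a l) := by
    intro u hu
    set S1 := ∑ j ∈ J, β j * (u j)^2 with hS1
    set S2 := ∑ j ∈ J, β j * a j * u j with hS2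
    set S3 := ∑ j ∈ J, β j * (a j)^2 with hS3
    set S4 := ∑ j ∈ J, γ j * u j with hS4
    set S5 := ∑ j ∈ J, γ j * a j with hS5
    set P1 := ∑ k ∈ J, ∑ l ∈ J.filter (fun l => k < l), δ k l * u k * u l with hP1
    set P2 := ∑ j ∈ J, u j * (∑ l ∈ J.erase j, δ j l * a l) with hP2
    set P3 := ∑ k ∈ J, ∑ l ∈ J.filter (fun l => k < l), δ k l * a k * a l with hP3
    have L1 : (∑ j ∈ J, β j * (u j - a j)^2) = S1 - 2 * S2 + S3 := by
      rw [hS1, hS2, hS3, Finset.mul_sum, ← Finset.sum_sub_distrib, ← Finset.sum_add_distrib]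
      exact Finset.sum_congr rfl fun j _ => by ring
    have L2 : (∑ j ∈ J, γ j * ((0 - a i) : ℝ) * (u j - a j)) = -(a i * S4) + a i * S5 := by
      rw [hS4, hS5, Finset.mul_sum, Finset.mul_sum, ← Finset.sum_neg_distrib,
        ← Finset.sum_add_distrib]
      exact Finset.sum_congr rfl fun j _ => by ring
    have L3 : (∑ k ∈ J, ∑ l ∈ J.filter (fun l => k < l), δ k l * (u k - a k) * (u l - a l))
        = P1 - P2 + P3 := by
      have step : (∑ k ∈ J, ∑ l ∈ J.filter (fun l => k < l), δ k l * (u k - a k) * (u l - a l))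
          = ∑ k ∈ J, ∑ l ∈ J.filter (fun l => k < l),
              (δ k l * u k * u l
                - ((δ k l * a l * u k) + (δ l k * a k * u l))
                + δ k l * a k * a l) :=
        Finset.sum_congr rfl fun k _ => Finset.sum_congr rfl fun l _ => by
          rw [hδsymm l k]; ring
      have hmid : ((∑ k ∈ J, ∑ l ∈ J.filter (fun l => k < l), δ k l * a l * u k)
            + ∑ k ∈ J, ∑ l ∈ J.filter (fun l => k < l), δ l k * a k * u l) = P2 := by
        rw [← Finset.sum_add_distrib]
        refine Eq.trans (Finset.sum_congr rfl fun k _ => Finset.sum_add_distrib.symm) ?_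
        rw [pair_split (fun k l => δ k l * a l * u k), hP2]
        refine Finset.sum_congr rfl fun j _ => ?_
        rw [Finset.mul_sum]
        exact Finset.sum_congr rfl fun l _ => by ring
      rw [step]
      simp only [Finset.sum_add_distrib, Finset.sum_sub_distrib]
      rw [hmid, hP1, hP3]
    have hS1nn : 0 ≤ S1 := Finset.sum_nonneg fun j hj =>
      mul_nonneg (hβ j hj) (sq_nonneg _)
    have hS3nn : 0 ≤ S3 := Finset.sum_nonneg fun j hj =>
      mul_nonneg (hβ j hj) (sq_nonneg _)
    have hP1nn : 0 ≤ P1 := Finset.sum_nonneg fun k hk => Finset.sum_nonneg fun l hl => by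
      rw [Finset.mem_filter] at hl
      exact mul_nonneg (mul_nonneg (hδ k hk l hl.1 (ne_of_lt hl.2)) (hu k hk)) (hu l hl.1)
    have hP3nn : 0 ≤ P3 := Finset.sum_nonneg fun k hk => Finset.sum_nonneg fun l hl => by
      rw [Finset.mem_filter] at hl
      exact mul_nonneg (mul_nonneg (hδ k hk l hl.1 (ne_of_lt hl.2)) (ha k).le) (ha l).le
    have hB : 0 ≤ -(a i * S4) - 2 * S2 - P2 := by
      have hB0 : 0 ≤ ∑ j ∈ J, u j * ((-γ j) * a i
          - (2 * β j * a j + ∑ l ∈ J.erase j, δ j l * a l)) :=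
        Finset.sum_nonneg fun j hj => mul_nonneg (hu j hj) (by linarith [h2 j hj])
      have hBeq : (∑ j ∈ J, u j * ((-γ j) * a i
            - (2 * β j * a j + ∑ l ∈ J.erase j, δ j l * a l)))
          = -(a i * S4) - 2 * S2 - P2 := by
        rw [hS4, hS2, hP2, Finset.mul_sum, Finset.mul_sum, ← Finset.sum_neg_distrib,
          ← Finset.sum_sub_distrib, ← Finset.sum_sub_distrib]
        exact Finset.sum_congr rfl fun j _ => by ring
      rw [hBeq] at hB0
      exact hB0
    have hC : 0 ≤ βii * (a i)^2 + a i * S5 := by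
      have hS5' : (∑ j ∈ J, (-γ j) * a j) = -S5 := by
        rw [hS5, ← Finset.sum_neg_distrib]
        exact Finset.sum_congr rfl fun j _ => by ring
      rw [hS5'] at h1
      have h5 : 0 ≤ βii * a i + S5 := by linarith
      nlinarith [mul_nonneg (ha i).le h5]
    rw [L1, L2, L3]
    linarith
  -- conclude: take μ₀ = 1 (any positive value works)
  refine ⟨1, one_pos, fun μ hμ => ?_⟩
  intro x hxi hxnn
  have hμ0 : (0:ℝ) < μ := hμ.1
  have hμne : μ ≠ 0 := ne_of_gt hμ0
  dsimp only
  set u : Fin N → ℝ := fun k => μ * x k with hu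
  have hkey := key u fun j hj =>
    mul_nonneg hμ0.le (hxnn j (by rintro rfl; exact hiJ hj))
  have hy : ∀ k, x k - a k / μ = (u k - a k) / μ := fun k => by
    show x k - a k / μ = (μ * x k - a k) / μ
    field_simp
  have hui : u i = 0 := by
    show μ * x i = 0
    rw [hxi, mul_zero]
  simp only [hy, hui]
  have e1 : βii * ((0 - a i) / μ)^2 = (1/μ^2) * (βii * (a i)^2) := by
    field_simp
    ring
  have e2 : (∑ j ∈ J, β j * ((u j - a j) / μ)^2)
      = (1/μ^2) * ∑ j ∈ J, β j * (u j - a j)^2 := by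
    rw [Finset.mul_sum]
    exact Finset.sum_congr rfl fun j _ => by ring
  have e3 : (∑ j ∈ J, γ j * ((0 - a i) / μ) * ((u j - a j) / μ))
      = (1/μ^2) * ∑ j ∈ J, γ j * ((0 - a i) : ℝ) * (u j - a j) := by
    rw [Finset.mul_sum]
    exact Finset.sum_congr rfl fun j _ => by ring
  have e4 : (∑ k ∈ J, ∑ l ∈ J.filter (fun l => k < l),
        δ k l * ((u k - a k) / μ) * ((u l - a l) / μ))
      = (1/μ^2) * ∑ k ∈ J, ∑ l ∈ J.filter (fun l => k < l),
          δ k l * (u k - a k) * (u l - a l) := by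
    rw [Finset.mul_sum]
    refine Finset.sum_congr rfl fun k _ => ?_
    rw [Finset.mul_sum]
    exact Finset.sum_congr rfl fun l _ => by ring
  rw [e1, e2, e3, e4, ← mul_add, ← mul_add, ← mul_add]
  exact mul_nonneg (by positivity) hkey
end

section
/- The one-wing-chaos system dx/dt = α₁ + α₂x + α₃x² − α₄xy, dy/dt = |α₂|x − α₅y + α₆z, dz/dt = |α₂|x − α₇z + α₈yz, with α₁ = 1/(μ²|α₂|), α₂ = 1/ε² + 27/(10ε) − 2/μ, α₃ = |α₂|, α₄ = (27/10)μ, α₅ = ε, α₆ = 10/27, α₇ = 1/ε + 27/10 + ε, α₈ = (27/10)εμ, is a chemical dynamical system for all ε, μ > 0 such that α₂ ≠ 0 (in particular for all small enough ε with μ fixed, where α₂ > 0). -/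
/-- The one-wing-chaos system is a chemical dynamical system for all
`ε, μ > 0` with `α₂ ≠ 0`. -/
theorem stmt12 (ε μ α₁ α₂ α₃ α₄ α₅ α₆ α₇ α₈ : ℝ)
    (hε : 0 < ε) (hμ : 0 < μ)
    (h2 : α₂ = 1/ε^2 + 27/(10*ε) - 2/μ) (hα₂ : α₂ ≠ 0)
    (h1 : α₁ = 1/(μ^2 * |α₂|)) (h3 : α₃ = |α₂|) (h4 : α₄ = (27/10)*μ)
    (h5 : α₅ = ε) (h6 : α₆ = 10/27) (h7 : α₇ = 1/ε + 27/10 + ε)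
    (h8 : α₈ = (27/10)*ε*μ) :
    IsChemical (0 : Fin 3)
      (fun v => α₁ + α₂ * v 0 + α₃ * (v 0)^2 - α₄ * v 0 * v 1) ∧
    IsChemical (1 : Fin 3)
      (fun v => |α₂| * v 0 - α₅ * v 1 + α₆ * v 2) ∧
    IsChemical (2 : Fin 3)
      (fun v => |α₂| * v 0 - α₇ * v 2 + α₈ * v 1 * v 2) := by
  refine ⟨?_, ?_, ?_⟩ <;> intro v h0 hj
  · simp only [h0, mul_zero, zero_mul, zero_pow, sub_zero, add_zero, ne_eq,
      OfNat.ofNat_ne_zero, not_false_eq_true, pow_eq_zero_iff]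
    have : 0 < α₁ := by
      rw [h1]
      positivity
    linarith
  · have hv0 : 0 ≤ v 0 := hj 0 (by decide)
    have hv2 : 0 ≤ v 2 := hj 2 (by decide)
    simp only [h0, mul_zero, sub_zero, h6]
    positivity
  · have hv0 : 0 ≤ v 0 := hj 0 (by decide)
    simp only [h0, mul_zero, sub_zero, add_zero]
    positivity
end

section
/- The two-wing-chaos system dx/dt = α₁ − α₂x + α₃x² + α₄y² − α₅xy, dy/dt = −α₆y + α₅xy + α₇yz − α₈xyz, dz/dt = α₆y − α₉z, with α₁ = 4/(εμ²) − 1/μ² − 1, α₂ = 4/μ − ε/μ, α₃ = ε, α₄ = 1/ε², α₅ = 1, α₆ = 2/(εμ), α₇ = μ/ε, α₈ = μ²/2, α₉ = 1, is a cubic chemical dynamical system for all ε ∈ (0, 4) and μ ∈ (0, 1) with 4/ε − 1 > μ², and it contains exactly one cubic monomial, namely −α₈xyz in the second equation. -/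
open MvPolynomial

lemma aux_p2_eq (a b c d : ℝ) :
    (-C a * X 1 + C b * X 0 * X 1 + C c * X 1 * X 2 - C d * X 0 * X 1 * X 2 : MvPolynomial (Fin 3) ℝ)
    = monomial (Finsupp.single 1 1) (-a) + monomial (Finsupp.single 0 1 + Finsupp.single 1 1) b
      + monomial (Finsupp.single 1 1 + Finsupp.single 2 1) c
      + monomial (Finsupp.single 0 1 + Finsupp.single 1 1 + Finsupp.single 2 1) (-d) := by
  simp only [X, C_apply, monomial_mul, neg_mul, map_neg, one_mul, mul_one, zero_add, sub_eq_add_neg]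

lemma aux_p1_eq (a b c d e : ℝ) :
    (C a - C b * X 0 + C c * X 0 ^ 2 + C d * X 1 ^ 2 - C e * X 0 * X 1 : MvPolynomial (Fin 3) ℝ)
    = monomial 0 a + monomial (Finsupp.single 0 1) (-b) + monomial (Finsupp.single 0 2) c
      + monomial (Finsupp.single 1 2) d + monomial (Finsupp.single 0 1 + Finsupp.single 1 1) (-e) := by
  simp only [X, C_apply, monomial_mul, monomial_pow, neg_mul, map_neg, one_mul, mul_one, one_pow,
    zero_add, add_zero, sub_eq_add_neg, Finsupp.smul_single, smul_eq_mul, mul_one,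
    Nat.reduceMul]

lemma aux_p3_eq (a b : ℝ) :
    (C a * X 1 - C b * X 2 : MvPolynomial (Fin 3) ℝ)
    = monomial (Finsupp.single 1 1) a + monomial (Finsupp.single 2 1) (-b) := by
  simp only [X, C_apply, monomial_mul, neg_mul, map_neg, one_mul, mul_one, zero_add, add_zero,
    sub_eq_add_neg]

lemma aux_sum1 (i : Fin 3) : ((Finsupp.single i 1 : Fin 3 →₀ ℕ).sum fun _ e => e) = 1 := by
  simp
lemma aux_sum2 (i j : Fin 3) :
    ((Finsupp.single i 1 + Finsupp.single j 1 : Fin 3 →₀ ℕ).sum fun _ e => e) = 2 := by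
  rw [Finsupp.sum_add_index]
  · simp
  · intros; rfl
  · intros; rfl
lemma aux_sum2' (i : Fin 3) : ((Finsupp.single i 2 : Fin 3 →₀ ℕ).sum fun _ e => e) = 2 := by
  simp
lemma aux_sum0 : ((0 : Fin 3 →₀ ℕ).sum fun _ e => e) = 0 := by simp
lemma aux_sum3 :
    ((Finsupp.single 0 1 + Finsupp.single 1 1 + Finsupp.single 2 1 : Fin 3 →₀ ℕ).sum
      fun _ e => e) = 3 := by
  rw [Finsupp.sum_add_index (by intros; rfl) (by intros; rfl), aux_sum2, aux_sum1]

lemma aux_coeff (a b c d : ℝ) :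
    coeff (Finsupp.single 0 1 + Finsupp.single 1 1 + Finsupp.single 2 1)
      (monomial (Finsupp.single 1 1) (-a) + monomial (Finsupp.single 0 1 + Finsupp.single 1 1) b
      + monomial (Finsupp.single 1 1 + Finsupp.single 2 1) c
      + monomial (Finsupp.single 0 1 + Finsupp.single 1 1 + Finsupp.single 2 1) (-d)
        : MvPolynomial (Fin 3) ℝ) = -d := by
  rw [coeff_add, coeff_add, coeff_add, coeff_monomial, coeff_monomial, coeff_monomial,
    coeff_monomial]
  norm_num [Finsupp.ext_iff, Fin.forall_fin_succ, Finsupp.single_apply,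
    (by decide : ((2:Fin 3) = 0) = False), (by decide : ((2:Fin 3) = 1) = False),
    (by decide : ((1:Fin 3) = 2) = False), (by decide : ((0:Fin 3) = 2) = False),
    (by decide : ((0:Fin 3) = 1) = False), (by decide : ((1:Fin 3) = 0) = False)]

/-- The two-wing-chaos system is a cubic chemical dynamical system for all
`ε ∈ (0,4)`, `μ ∈ (0,1)` with `4/ε - 1 > μ²`, containing exactly one cubic
monomial, namely `−α₈·xyz` in the second equation. -/
theorem stmt13 (ε μ α₁ α₂ α₃ α₄ α₅ α₆ α₇ α₈ α₉ : ℝ)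
    (hε : 0 < ε) (hε4 : ε < 4) (hμ : 0 < μ) (hμ1 : μ < 1)
    (hεμ : 4/ε - 1 > μ^2)
    (h1 : α₁ = 4/(ε*μ^2) - 1/μ^2 - 1) (h2 : α₂ = 4/μ - ε/μ)
    (h3 : α₃ = ε) (h4 : α₄ = 1/ε^2) (h5 : α₅ = 1)
    (h6 : α₆ = 2/(ε*μ)) (h7 : α₇ = μ/ε) (h8 : α₈ = μ^2/2) (h9 : α₉ = 1) :
    (let p1 : MvPolynomial (Fin 3) ℝ :=
      C α₁ - C α₂ * X 0 + C α₃ * X 0 ^ 2 + C α₄ * X 1 ^ 2 - C α₅ * X 0 * X 1;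
     let p2 : MvPolynomial (Fin 3) ℝ :=
      -C α₆ * X 1 + C α₅ * X 0 * X 1 + C α₇ * X 1 * X 2 - C α₈ * X 0 * X 1 * X 2;
     let p3 : MvPolynomial (Fin 3) ℝ := C α₆ * X 1 - C α₉ * X 2;
     IsChemical (0 : Fin 3) (fun v => eval v p1) ∧
     IsChemical (1 : Fin 3) (fun v => eval v p2) ∧
     IsChemical (2 : Fin 3) (fun v => eval v p3) ∧
     p1.totalDegree ≤ 2 ∧ p3.totalDegree ≤ 2 ∧ p2.totalDegree = 3 ∧
     (p2.support.filter (fun d : Fin 3 →₀ ℕ => (d.sum fun _ e => e) = 3)) =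
       {Finsupp.single 0 1 + Finsupp.single 1 1 + Finsupp.single 2 1} ∧
     p2.coeff (Finsupp.single 0 1 + Finsupp.single 1 1 + Finsupp.single 2 1)
       = -α₈) := by
  intro p1 p2 p3
  have hμ2 : (0:ℝ) < μ^2 := by positivity
  have hα₁ : 0 < α₁ := by
    rw [h1, show 4/(ε*μ^2) - 1/μ^2 - 1 = (4 - ε - ε*μ^2)/(ε*μ^2) by field_simp]
    apply div_pos _ (by positivity)
    have : (μ^2 + 1) * ε < 4 := by
      rw [← lt_div_iff₀ hε]; linarith
    nlinarith
  have hα₄ : 0 < α₄ := by rw [h4]; positivity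
  have hα₆ : 0 < α₆ := by rw [h6]; positivity
  have hα₈ : 0 < α₈ := by rw [h8]; positivity
  have hp2 : p2 = monomial (Finsupp.single 1 1) (-α₆)
      + monomial (Finsupp.single 0 1 + Finsupp.single 1 1) α₅
      + monomial (Finsupp.single 1 1 + Finsupp.single 2 1) α₇
      + monomial (Finsupp.single 0 1 + Finsupp.single 1 1 + Finsupp.single 2 1) (-α₈) :=
    aux_p2_eq α₆ α₅ α₇ α₈
  have hcoeff : p2.coeff (Finsupp.single 0 1 + Finsupp.single 1 1 + Finsupp.single 2 1)
      = -α₈ := by rw [hp2]; exact aux_coeff α₆ α₅ α₇ α₈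
  refine ⟨?_, ?_, ?_, ?_, ?_, ?_, ?_, hcoeff⟩
  · intro v h0 hj
    have hv1 := hj 1 (by decide)
    simp only [p1, map_add, map_sub, map_mul, map_pow, eval_C, eval_X, h0]
    have : 0 ≤ α₄ * v 1 ^ 2 := by positivity
    nlinarith
  · intro v h0 hj
    simp only [p2, map_add, map_sub, map_mul, map_neg, eval_C, eval_X, h0]
    ring_nf
    simp [h0]
  · intro v h0 hj
    have hv1 := hj 1 (by decide)
    simp only [p3, map_sub, map_mul, eval_C, eval_X, h0]
    have : 0 ≤ α₆ * v 1 := by positivity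
    linarith
  · rw [show p1 = _ from aux_p1_eq α₁ α₂ α₃ α₄ α₅]
    refine (totalDegree_add _ _).trans (max_le ((totalDegree_add _ _).trans (max_le
      ((totalDegree_add _ _).trans (max_le ((totalDegree_add _ _).trans (max_le ?_ ?_)) ?_)) ?_)) ?_)
    · exact (totalDegree_monomial_le _ _).trans (by simp [Finsupp.sum_add_index])
    · exact (totalDegree_monomial_le _ _).trans (by simp [Finsupp.sum_add_index])
    · exact (totalDegree_monomial_le _ _).trans (by simp [Finsupp.sum_add_index])
    · exact (totalDegree_monomial_le _ _).trans (by simp [Finsupp.sum_add_index])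
    · exact (totalDegree_monomial_le _ _).trans (by simp [Finsupp.sum_add_index])
  · rw [show p3 = _ from aux_p3_eq α₆ α₉]
    refine (totalDegree_add _ _).trans (max_le ?_ ?_)
    · exact (totalDegree_monomial_le _ _).trans (by simp [Finsupp.sum_add_index])
    · exact (totalDegree_monomial_le _ _).trans (by simp [Finsupp.sum_add_index])
  · refine le_antisymm ?_ ?_
    · rw [hp2]
      refine (totalDegree_add _ _).trans (max_le ((totalDegree_add _ _).trans (max_le
        ((totalDegree_add _ _).trans (max_le ?_ ?_)) ?_)) ?_)
      · exact (totalDegree_monomial_le _ _).trans (by simp [Finsupp.sum_add_index])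
      · exact (totalDegree_monomial_le _ _).trans (by simp [Finsupp.sum_add_index])
      · exact (totalDegree_monomial_le _ _).trans (by simp [Finsupp.sum_add_index])
      · exact (totalDegree_monomial_le _ _).trans (by simp [Finsupp.sum_add_index])
    · have hmem : (Finsupp.single 0 1 + Finsupp.single 1 1 + Finsupp.single 2 1 : Fin 3 →₀ ℕ)
          ∈ p2.support := by
        rw [mem_support_iff, hcoeff]; exact neg_ne_zero.mpr (ne_of_gt hα₈)
      have h := le_totalDegree hmem
      rwa [aux_sum3] at h
  · ext d
    simp only [Finset.mem_filter, Finset.mem_singleton]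
    constructor
    · rintro ⟨hd, hsum⟩
      have hsub : p2.support ⊆ {Finsupp.single 1 1} ∪ {Finsupp.single 0 1 + Finsupp.single 1 1}
          ∪ {Finsupp.single 1 1 + Finsupp.single 2 1}
          ∪ {Finsupp.single 0 1 + Finsupp.single 1 1 + Finsupp.single 2 1} := by
        rw [hp2]
        refine (support_add).trans (Finset.union_subset_union ((support_add).trans
          (Finset.union_subset_union ((support_add).trans (Finset.union_subset_union ?_ ?_)) ?_)) ?_) <;>
          exact (support_monomial_subset)
      have := hsub hd
      simp only [Finset.mem_union, Finset.mem_singleton] at this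
      rcases this with ((h | h) | h) | h
      · rw [h, aux_sum1] at hsum; omega
      · rw [h, aux_sum2] at hsum; omega
      · rw [h, aux_sum2] at hsum; omega
      · exact h
    · rintro rfl
      refine ⟨?_, aux_sum3⟩
      rw [mem_support_iff, hcoeff]
      exact neg_ne_zero.mpr (ne_of_gt hα₈)
end

section
/- The hidden-chaos system dx/dt = α₁ − α₂x + α₃y + α₄z + α₅x² − α₆xy − α₇xz, dy/dt = α₁ − α₈yz, dz/dt = −α₉z + α₇xz, with α₁ = 2/μ, α₂ = 1/μ, α₃ = 40/(620εμ + 57εμ²), α₄ = (3 − 31εμ)/(6ε), α₅ = ε(620 + 57μ)/200, α₆ = 1/5, α₇ = μ(620 + 57μ)/400, α₈ = μ²(620 + 57μ)/240, α₉ = 1/(2ε), is a quadratic chemical dynamical system for all ε > 0 and μ > 0 with εμ < 3/31: all nine parameters are positive and each right-hand side is chemical with respect to its own coordinate. -/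
/-- The hidden-chaos system is a quadratic chemical dynamical system for all
`ε, μ > 0` with `εμ < 3/31`: all nine parameters are positive and each
right-hand side is chemical with respect to its own coordinate. -/
theorem stmt15 (ε μ α₁ α₂ α₃ α₄ α₅ α₆ α₇ α₈ α₉ : ℝ)
    (hε : 0 < ε) (hμ : 0 < μ) (hεμ : ε * μ < 3/31)
    (h1 : α₁ = 2/μ) (h2 : α₂ = 1/μ)
    (h3 : α₃ = 40/(620*ε*μ + 57*ε*μ^2))
    (h4 : α₄ = (3 - 31*ε*μ)/(6*ε))
    (h5 : α₅ = ε*(620 + 57*μ)/200) (h6 : α₆ = 1/5)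
    (h7 : α₇ = μ*(620 + 57*μ)/400) (h8 : α₈ = μ^2*(620 + 57*μ)/240)
    (h9 : α₉ = 1/(2*ε)) :
    (0 < α₁ ∧ 0 < α₂ ∧ 0 < α₃ ∧ 0 < α₄ ∧ 0 < α₅ ∧
      0 < α₆ ∧ 0 < α₇ ∧ 0 < α₈ ∧ 0 < α₉) ∧
    IsChemical (0 : Fin 3)
      (fun v => α₁ - α₂ * v 0 + α₃ * v 1 + α₄ * v 2
        + α₅ * (v 0)^2 - α₆ * v 0 * v 1 - α₇ * v 0 * v 2) ∧
    IsChemical (1 : Fin 3) (fun v => α₁ - α₈ * v 1 * v 2) ∧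
    IsChemical (2 : Fin 3) (fun v => -α₉ * v 2 + α₇ * v 0 * v 2) := by
  have hp1 : 0 < α₁ := by rw [h1]; positivity
  have hp2 : 0 < α₂ := by rw [h2]; positivity
  have hden : 0 < 620*ε*μ + 57*ε*μ^2 := by positivity
  have hp3 : 0 < α₃ := by rw [h3]; positivity
  have hp4 : 0 < α₄ := by
    rw [h4]
    apply div_pos _ (by linarith)
    nlinarith
  have hp5 : 0 < α₅ := by rw [h5]; positivity
  have hp6 : 0 < α₆ := by rw [h6]; norm_num
  have hp7 : 0 < α₇ := by rw [h7]; positivity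
  have hp8 : 0 < α₈ := by rw [h8]; positivity
  have hp9 : 0 < α₉ := by rw [h9]; positivity
  refine ⟨⟨hp1, hp2, hp3, hp4, hp5, hp6, hp7, hp8, hp9⟩, ?_, ?_, ?_⟩
  · intro v h0 hj
    have h1' := hj 1 (by decide)
    have h2' := hj 2 (by decide)
    simp only []
    rw [h0]
    have := mul_nonneg hp3.le h1'
    have := mul_nonneg hp4.le h2'
    nlinarith
  · intro v h0 hj
    have h0' := hj 0 (by decide)
    have h2' := hj 2 (by decide)
    simp only []
    rw [h0]
    nlinarith
  · intro v h0 hj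
    simp only []
    rw [h0]
    simp
end

section
/- (Non-negativity invariance of CDS solutions via the chemical condition, local version) Let f : ℝ^N → ℝ^N be a polynomial vector field such that each f_i is chemical with respect to coordinate i, and suppose additionally that f_i(x) > 0 whenever x_i = 0 and x_j ≥ 0 for all j ≠ i (strict chemicality). Then for any solution x(t) of dx/dt = f(x) with x(0) in the nonnegative orthant, x(t) remains in the nonnegative orthant for all t ≥ 0 in its interval of existence. -/
/-- Forward invariance of the nonnegative orthant for a strictly chemical
polynomial vector field. -/
theorem stmt16 {N : ℕ} (F : Fin N → MvPolynomial (Fin N) ℝ)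
    (hchem : ∀ (i : Fin N) (x : Fin N → ℝ), x i = 0 → (∀ j, j ≠ i → 0 ≤ x j) →
      0 ≤ MvPolynomial.eval x (F i))
    (hstrict : ∀ (i : Fin N) (x : Fin N → ℝ), x i = 0 → (∀ j, j ≠ i → 0 ≤ x j) →
      0 < MvPolynomial.eval x (F i))
    (T : ℝ) (x : ℝ → Fin N → ℝ)
    (hx : ∀ t ∈ Set.Ico (0:ℝ) T,
      HasDerivAt x (fun i => MvPolynomial.eval (x t) (F i)) t)
    (h0 : ∀ i, 0 ≤ x 0 i) :
    ∀ t ∈ Set.Ico (0:ℝ) T, ∀ i, 0 ≤ x t i := by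
  by_contra hcon
  push_neg at hcon
  obtain ⟨t₀, ht₀, i₀, hi₀⟩ := hcon
  set A : Fin N → Set ℝ := fun i => {t | t ∈ Set.Ico (0:ℝ) T ∧ x t i < 0} with hA
  set B : Set ℝ := ⋃ i, A i with hB
  have hBne : B.Nonempty := ⟨t₀, Set.mem_iUnion.2 ⟨i₀, ht₀, hi₀⟩⟩
  have hBbdd : BddBelow B := ⟨0, fun t ht => by
    obtain ⟨i, hi⟩ := Set.mem_iUnion.1 ht
    exact hi.1.1⟩
  set τ := sInf B with hτdef
  have hτ0 : 0 ≤ τ := le_csInf hBne (fun t ht => by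
    obtain ⟨i, hi⟩ := Set.mem_iUnion.1 ht
    exact hi.1.1)
  have hτT : τ < T :=
    lt_of_le_of_lt (csInf_le hBbdd (Set.mem_iUnion.2 ⟨i₀, ht₀, hi₀⟩)) ht₀.2
  have hτmem : τ ∈ Set.Ico (0:ℝ) T := ⟨hτ0, hτT⟩
  have hcont : ∀ j, ContinuousAt (fun s => x s j) τ :=
    fun j => (continuous_apply j).continuousAt.comp (hx τ hτmem).continuousAt
  -- all coordinates are nonnegative on [0, τ)
  have hpre : ∀ s, 0 ≤ s → s < τ → ∀ j, 0 ≤ x s j := by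
    intro s hs0 hsτ j
    by_contra h
    push_neg at h
    exact absurd (csInf_le hBbdd (Set.mem_iUnion.2 ⟨j, ⟨hs0, hsτ.trans hτT⟩, h⟩))
      (not_le.2 hsτ)
  -- all coordinates are nonnegative at τ
  have hτnn : ∀ j, 0 ≤ x τ j := by
    intro j
    rcases eq_or_lt_of_le hτ0 with h | h
    · rw [← h]; exact h0 j
    · have hne : (nhdsWithin τ (Set.Ico (0:ℝ) τ)).NeBot := by
        rw [← mem_closure_iff_nhdsWithin_neBot, closure_Ico h.ne]
        exact ⟨hτ0, le_refl τ⟩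
      have htend : Filter.Tendsto (fun s => x s j) (nhdsWithin τ (Set.Ico (0:ℝ) τ))
          (nhds (x τ j)) := (hcont j).tendsto.mono_left nhdsWithin_le_nhds
      refine ge_of_tendsto htend ?_
      filter_upwards [self_mem_nhdsWithin] with s hs
      exact hpre s hs.1 hs.2 j
  -- pick a coordinate i whose bad set clusters at τ
  have hτcl : τ ∈ closure B := csInf_mem_closure hBne hBbdd
  rw [hB, closure_iUnion_of_finite] at hτcl
  obtain ⟨i, hi⟩ := Set.mem_iUnion.1 hτcl
  have hneA : (nhdsWithin τ (A i)).NeBot := mem_closure_iff_nhdsWithin_neBot.1 hi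
  -- x τ i = 0
  have hxi0 : x τ i = 0 := by
    refine le_antisymm ?_ (hτnn i)
    have htend : Filter.Tendsto (fun s => x s i) (nhdsWithin τ (A i)) (nhds (x τ i)) :=
      (hcont i).tendsto.mono_left nhdsWithin_le_nhds
    refine le_of_tendsto htend ?_
    filter_upwards [self_mem_nhdsWithin] with s hs
    exact hs.2.le
  -- the derivative of coordinate i at τ is strictly positive
  have hd : 0 < MvPolynomial.eval (x τ) (F i) :=
    hstrict i (x τ) hxi0 (fun j _ => hτnn j)
  have hderiv : HasDerivAt (fun s => x s i) (MvPolynomial.eval (x τ) (F i)) τ :=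
    hasDerivAt_pi.1 (hx τ hτmem) i
  have hslope := hasDerivAt_iff_tendsto_slope.1 hderiv
  have hpos : ∀ᶠ s in nhdsWithin τ {τ}ᶜ, 0 < slope (fun s => x s i) τ s :=
    hslope.eventually (eventually_gt_nhds hd)
  have hAsub : A i ⊆ {τ}ᶜ := by
    intro s hs hsτ
    rw [Set.mem_singleton_iff] at hsτ
    subst hsτ
    exact absurd hxi0 (ne_of_lt hs.2)
  have hpos' : ∀ᶠ s in nhdsWithin τ (A i), 0 < slope (fun s => x s i) τ s :=
    hpos.filter_mono (nhdsWithin_mono τ hAsub)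
  obtain ⟨s, hspos, hsA⟩ := (hpos'.and self_mem_nhdsWithin).exists
  -- but the slope from τ to a bad point s is negative
  have hsτ : τ < s := by
    rcases lt_or_eq_of_le (csInf_le hBbdd (Set.mem_iUnion.2 ⟨i, hsA⟩)) with h | h
    · exact h
    · exact absurd h.symm (hAsub hsA)
  have : slope (fun s => x s i) τ s < 0 := by
    rw [slope_def_field, hxi0, sub_zero]
    exact div_neg_of_neg_of_pos hsA.2 (sub_pos.2 hsτ)
  exact absurd hspos (not_lt.2 this.le)
end

section
/- Under the translation x̄ = x + a/μ, ȳ = y + b/μ, z̄ = z + c/μ applied to the perturbed system dx/dt = −y + x² − (μ/a)xy, dy/dt = (27/10)x + z − εy, dz/dt = x + y − εz + (μ/c)yz (with a, b, c, ε, μ > 0), the resulting system has right-hand sides: dx̄/dt = a²/μ² + (−2a/μ + b/a)x̄ + x̄² − (μ/a)x̄ȳ; dȳ/dt = (1/μ)(−(27/10)a − c + εb) + (27/10)x̄ − εȳ + z̄; dz̄/dt = (1/μ)(−a + εc) + x̄ − (b/c + ε)z̄ + (μ/c)ȳz̄. Moreover, if b = a/ε² + 27a/(10ε) and c = a/ε,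 then for every sufficiently small μ > 0 this translated system is a chemical dynamical system. -/
/-- Translation of the perturbed Sprott-P system: the translated right-hand
sides equal the displayed expressions, and with `b = a/ε² + 27a/(10ε)` and
`c = a/ε` the translated system is a chemical dynamical system for every
sufficiently small `μ > 0`. -/
theorem stmt17 (a b c ε : ℝ) (ha : 0 < a) (hb : 0 < b) (hc : 0 < c)
    (hε : 0 < ε) :
    (∀ μ > (0:ℝ), ∀ xb yb zb : ℝ,
      (-(yb - b/μ) + (xb - a/μ)^2 - (μ/a)*(xb - a/μ)*(yb - b/μ)
        = a^2/μ^2 + (-2*a/μ + b/a)*xb + xb^2 - (μ/a)*xb*yb) ∧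
      ((27/10)*(xb - a/μ) + (zb - c/μ) - ε*(yb - b/μ)
        = (1/μ)*(-(27/10)*a - c + ε*b) + (27/10)*xb - ε*yb + zb) ∧
      ((xb - a/μ) + (yb - b/μ) - ε*(zb - c/μ) + (μ/c)*(yb - b/μ)*(zb - c/μ)
        = (1/μ)*(-a + ε*c) + xb - (b/c + ε)*zb + (μ/c)*yb*zb)) ∧
    (b = a/ε^2 + 27*a/(10*ε) → c = a/ε →
      ∃ μ0 > 0, ∀ μ ∈ Set.Ioo (0:ℝ) μ0,
        IsChemical (0 : Fin 3) (fun v =>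
          a^2/μ^2 + (-2*a/μ + b/a)*v 0 + (v 0)^2 - (μ/a)*v 0*v 1) ∧
        IsChemical (1 : Fin 3) (fun v =>
          (1/μ)*(-(27/10)*a - c + ε*b) + (27/10)*v 0 - ε*v 1 + v 2) ∧
        IsChemical (2 : Fin 3) (fun v =>
          (1/μ)*(-a + ε*c) + v 0 - (b/c + ε)*v 2 + (μ/c)*v 1*v 2)) := by
  have ha' : a ≠ 0 := ne_of_gt ha
  have hc' : c ≠ 0 := ne_of_gt hc
  have hε' : ε ≠ 0 := ne_of_gt hε
  constructor
  · intro μ hμ xb yb zb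
    have hμ' : μ ≠ 0 := ne_of_gt hμ
    refine ⟨by field_simp; ring, by field_simp; ring, by field_simp; ring⟩
  · intro hbv hcv
    have hK2 : -(27/10)*a - c + ε*b = 0 := by
      subst hbv hcv; field_simp; ring
    have hK3 : -a + ε*c = 0 := by subst hcv; field_simp; ring
    refine ⟨1, one_pos, fun μ hμ => ?_⟩
    have hμ' : μ ≠ 0 := ne_of_gt hμ.1
    refine ⟨?_, ?_, ?_⟩
    · intro v h0 _
      simp only [h0]
      have : a^2/μ^2 + (-2*a/μ + b/a)*0 + (0:ℝ)^2 - (μ/a)*0*v 1 = a^2/μ^2 := by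
        ring
      rw [this]
      positivity
    · intro v h1 hj
      have h0 : 0 ≤ v 0 := hj 0 (by decide)
      have h2 : 0 ≤ v 2 := hj 2 (by decide)
      simp only [h1, hK2]
      nlinarith
    · intro v h2 hj
      have h0 : 0 ≤ v 0 := hj 0 (by decide)
      simp only [h2, hK3]
      nlinarith
end

section
/- Under the translation x̄ = x + a/μ, ȳ = y + b/μ, z̄ = z + c/μ applied to dx/dt = −1 + y² + ε(x² − xy), dy/dt = −xz − (μ/b)xyz, dz/dt = y − z, the resulting system is: dx̄/dt = [(1/μ²)(b² + εa² − εab) − 1] + (ε/μ)(b − 2a)x̄ + (1/μ)(−2b + εa)ȳ + εx̄² + ȳ² − εx̄ȳ; dȳ/dt = −(1/μ)(ac/b)ȳ + (c/b)x̄ȳ + (a/b)ȳz̄ − (μ/b)x̄ȳz̄; dz̄/dt = (1/μ)(c − b) + ȳ − z̄. Moreover, with a = 2b/ε and c = b, this translated system is a chemical dynamical system for every sufficiently small μ > 0 (specifically, all monomials not divisible by the corresponding barred variable have nonnegative coefficients: in equation 1 the constant is (b²/μ²)(1 + 4/ε − 2) − 1 = (b²/μ²)(4/ε − 1) − 1 >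 0 for small μ when ε < 4, the ȳ coefficient is (1/μ)(−2b + 2b) = 0, and ȳ² has coefficient 1 > 0; in equation 2 all monomials are divisible by ȳ; in equation 3 the constant is 0 and ȳ has coefficient 1). -/
/-- Translation of the perturbed Sprott-C system: the translated right-hand
sides equal the displayed expressions and, with `a = 2b/ε`, `c = b`, `b > 0`
and `0 < ε < 4`, the translated system is a chemical dynamical system for
every sufficiently small `μ > 0`. -/
theorem stmt18 (a b c ε : ℝ) (hb : 0 < b) (hε : 0 < ε) (hε4 : ε < 4)
    (hab : a = 2*b/ε) (hcb : c = b) :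
    (∀ μ > (0:ℝ), ∀ xb yb zb : ℝ,
      (-1 + (yb - b/μ)^2 + ε*((xb - a/μ)^2 - (xb - a/μ)*(yb - b/μ))
        = ((1/μ^2)*(b^2 + ε*a^2 - ε*a*b) - 1) + (ε/μ)*(b - 2*a)*xb
          + (1/μ)*(-2*b + ε*a)*yb + ε*xb^2 + yb^2 - ε*xb*yb) ∧
      (-(xb - a/μ)*(zb - c/μ) - (μ/b)*(xb - a/μ)*(yb - b/μ)*(zb - c/μ)
        = -(1/μ)*(a*c/b)*yb + (c/b)*xb*yb + (a/b)*yb*zb - (μ/b)*xb*yb*zb) ∧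
      ((yb - b/μ) - (zb - c/μ) = (1/μ)*(c - b) + yb - zb)) ∧
    (∃ μ0 > 0, ∀ μ ∈ Set.Ioo (0:ℝ) μ0,
      IsChemical (0 : Fin 3) (fun v =>
        ((1/μ^2)*(b^2 + ε*a^2 - ε*a*b) - 1) + (ε/μ)*(b - 2*a)*v 0
          + (1/μ)*(-2*b + ε*a)*v 1 + ε*(v 0)^2 + (v 1)^2 - ε*v 0*v 1) ∧
      IsChemical (1 : Fin 3) (fun v =>
        -(1/μ)*(a*c/b)*v 1 + (c/b)*v 0*v 1 + (a/b)*v 1*v 2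
          - (μ/b)*v 0*v 1*v 2) ∧
      IsChemical (2 : Fin 3) (fun v => (1/μ)*(c - b) + v 1 - v 2)) := by

  have hb0 : b ≠ 0 := ne_of_gt hb
  have hε0 : ε ≠ 0 := ne_of_gt hε
  constructor
  · intro μ hμ xb yb zb
    have hμ0 : μ ≠ 0 := ne_of_gt hμ
    refine ⟨by field_simp; ring, by field_simp; ring, by field_simp; ring⟩
  · have h4 : (0:ℝ) < 4 - ε := by linarith
    refine ⟨Real.sqrt (b^2*(4-ε)/ε), Real.sqrt_pos.mpr (by positivity), ?_⟩
    rintro μ ⟨hμpos, hμlt⟩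
    have hμ0 : μ ≠ 0 := ne_of_gt hμpos
    have hsq := Real.sq_sqrt (show (0:ℝ) ≤ b^2*(4-ε)/ε by positivity)
    have hμsq : μ^2 < b^2*(4-ε)/ε := by
      nlinarith [Real.sqrt_nonneg (b^2*(4-ε)/ε)]
    refine ⟨?_, ?_, ?_⟩
    · intro v h0 hpos
      have h1 : 0 ≤ v 1 := hpos 1 (by decide)
      have hconst : b^2 + ε*a^2 - ε*a*b = b^2*(4-ε)/ε := by
        subst hab; field_simp; ring
      have key : 0 ≤ (1/μ^2)*(b^2 + ε*a^2 - ε*a*b) - 1 := by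
        rw [hconst, sub_nonneg, one_div, inv_mul_eq_div, le_div_iff₀ (by positivity)]
        linarith
      have hεa : ε*a = 2*b := by rw [hab]; field_simp
      simp only [h0]
      rw [show -2*b + ε*a = 0 by linarith]
      nlinarith [sq_nonneg (v 1)]
    · intro v h1 hpos
      simp [h1]
    · intro v h2 hpos
      have h1 : 0 ≤ v 1 := hpos 1 (by decide)
      simp [hcb, h2]
      linarith
end
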